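/- Let α, β > 1 be real numbers. Then for all t, s ∈ [0,1]: t^α·s^β + α·t^(α−1)·(1−t)·s^β + β·t^α·s^(β−1)·(1−s) + (1−t)^α·(1−s)^β ≤ 1. -/
import Mathlib

/-- rpow self-bound: for `x ∈ [0,1]` and `1 ≤ p`, `x ^ p ≤ x`. -/
lemma aux_rpow_le_self {x p : ℝ} (hx0 : 0 ≤ x) (hx1 : x ≤ 1) (hp : 1 ≤ p) :
    x ^ p ≤ x := by
  rcases eq_or_lt_of_le hx0 with h | h
  · rw [← h, Real.zero_rpow (by linarith)]
  · calc x ^ p ≤ x ^ (1:ℝ) := Real.rpow_le_rpow_of_exponent_ge h hx1 hp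
    _ = x := Real.rpow_one x

/-- Tangent-line inequality: `x^p + p x^(p-1) (1-x) ≤ 1`. -/
lemma aux_tangent {x p : ℝ} (hx0 : 0 ≤ x) (hx1 : x ≤ 1) (hp : 1 < p) :
    x ^ p + p * x ^ (p - 1) * (1 - x) ≤ 1 := by
  rcases eq_or_lt_of_le hx0 with h | h
  · rw [← h, Real.zero_rpow (by linarith), Real.zero_rpow (by linarith)]
    norm_num
  · have hz : -1 ≤ 1 / x - 1 := by
      have : 0 < 1 / x := by positivity
      linarith
    have hb := one_add_mul_self_le_rpow_one_add hz hp.le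
    have h1 : (1 : ℝ) + (1 / x - 1) = 1 / x := by ring
    rw [h1] at hb
    -- hb : 1 + p * (1/x - 1) ≤ (1/x) ^ p
    have hxp : 0 < x ^ p := Real.rpow_pos_of_pos h p
    have hinv : (1 / x) ^ p = 1 / x ^ p := by
      rw [one_div, one_div, Real.inv_rpow hx0]
    rw [hinv] at hb
    have hmul : (1 + p * (1 / x - 1)) * x ^ p ≤ 1 := by
      calc (1 + p * (1 / x - 1)) * x ^ p ≤ (1 / x ^ p) * x ^ p :=
            mul_le_mul_of_nonneg_right hb hxp.le
        _ = 1 := by field_simp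
    have hsplit : x ^ (p - 1) * x = x ^ p := by
      rw [← Real.rpow_add_one h.ne' (p - 1)]; ring_nf
    have key : (1 + p * (1 / x - 1)) * x ^ p
        = x ^ p + p * x ^ (p - 1) * (1 - x) := by
      have hx' : x ≠ 0 := h.ne'
      field_simp
      linear_combination (-(p * (1 - x))) * hsplit
    linarith [key ▸ hmul]

/-- Normalized interaction inequality: for `α, β > 1` and `t, s ∈ [0,1]`,
`t^α s^β + α t^(α-1) (1-t) s^β + β t^α s^(β-1) (1-s) + (1-t)^α (1-s)^β ≤ 1`. -/
theorem normalized_interaction_le_one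
    (α β : ℝ) (hα : 1 < α) (hβ : 1 < β) :
    ∀ t s : ℝ, t ∈ Set.Icc (0 : ℝ) 1 → s ∈ Set.Icc (0 : ℝ) 1 →
      t ^ α * s ^ β + α * t ^ (α - 1) * (1 - t) * s ^ β
          + β * t ^ α * s ^ (β - 1) * (1 - s) + (1 - t) ^ α * (1 - s) ^ β ≤ 1 := by
  rintro t s ⟨ht0, ht1⟩ ⟨hs0, hs1⟩
  have h1t0 : (0:ℝ) ≤ 1 - t := by linarith
  have h1s0 : (0:ℝ) ≤ 1 - s := by linarith
  -- basic nonnegativity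
  have hA : 0 ≤ t ^ α := Real.rpow_nonneg ht0 α
  have hB : 0 ≤ s ^ β := Real.rpow_nonneg hs0 β
  have hCt : 0 ≤ (1 - t) ^ α := Real.rpow_nonneg h1t0 α
  have hCs : 0 ≤ (1 - s) ^ β := Real.rpow_nonneg h1s0 β
  have hDt : 0 ≤ α * t ^ (α - 1) * (1 - t) := by
    have := Real.rpow_nonneg ht0 (α - 1); positivity
  have hDs : 0 ≤ β * s ^ (β - 1) * (1 - s) := by
    have := Real.rpow_nonneg hs0 (β - 1); positivity
  -- key bounds: the remainder R = 1 - t^α dominates both terms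
  have hRt1 : α * t ^ (α - 1) * (1 - t) ≤ 1 - t ^ α := by
    have := aux_tangent ht0 ht1 hα; linarith
  have hRt2 : (1 - t) ^ α ≤ 1 - t ^ α := by
    have h1 := aux_rpow_le_self ht0 ht1 hα.le
    have h2 := aux_rpow_le_self h1t0 (by linarith) hα.le
    linarith
  have hRs1 : β * s ^ (β - 1) * (1 - s) ≤ 1 - s ^ β := by
    have := aux_tangent hs0 hs1 hβ; linarith
  have hRs2 : (1 - s) ^ β ≤ 1 - s ^ β := by
    have h1 := aux_rpow_le_self hs0 hs1 hβ.le
    have h2 := aux_rpow_le_self h1s0 (by linarith) hβ.le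
    linarith
  nlinarith [mul_le_mul hRt1 (le_refl (s ^ β)) hB (by linarith),
    mul_le_mul hRs1 (le_refl (t ^ α)) hA (by linarith),
    mul_le_mul hRt2 hRs2 hCs (by linarith),
    mul_nonneg hA hB]
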